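/- Let S satisfy causal factorization and S(0)=1. If h has support in the past of a Cauchy surface Σ₁ and b₋ has support in the future of Σ₁, then S(b₋)S(h)S(b₋)⁻¹ = S(b₋ + h)S(b₋)⁻¹, and this expression is independent of the choice of b₋ among all functions agreeing with a fixed g₋ on the causal past of supp h. -/
import Mathlib

/-- Let `S` satisfy causal factorization and `S 0 = 1`.
If `h` has support in the past of a Cauchy surface `Σ₁` and `b₋` has support
in its future (i.e. `later b₋ h`), then
`S(b₋) S(h) S(b₋)⁻¹ = S(b₋ + h) S(b₋)⁻¹`.  Moreover this expression is
independent of the choice of `b₋` among all functions agreeing with a fixed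
`g₋` on the causal past of `supp h`: if `b'` is another such choice, so that
the difference `b' - b` is supported away from the causal past of `supp h`
(causally separated from `h` by a Cauchy surface, `later h (b' - b)`), then
`S(b' + h) S(b')⁻¹ = S(b + h) S(b)⁻¹`. -/
theorem timeslice_stmt8 {D G : Type*} [AddCommMonoid D] [Group G]
    (S : D → G) (later : D → D → Prop)
    (hS0 : S 0 = 1)
    (hfact : ∀ f g h : D, later f h → S (f + g + h) = S (f + g) * (S g)⁻¹ * S (g + h))
    (h b b' c : D) (hbc : b' = b + c)
    (hlat_b : later b h) (hlat_b' : later b' h) (hlat_c : later h c) :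
    S b * S h * (S b)⁻¹ = S (b + h) * (S b)⁻¹ ∧
      S (b' + h) * (S b')⁻¹ = S (b + h) * (S b)⁻¹ := by
  have h1 : S (b + h) = S b * S h := by
    have := hfact b 0 h hlat_b
    simpa [hS0] using this
  constructor
  · rw [h1]
  · have h2 := hfact h b c hlat_c
    have e1 : h + b + c = b' + h := by rw [hbc]; abel
    have e2 : h + b = b + h := by abel
    rw [e1, e2, ← hbc] at h2
    rw [h2]
    group
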